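/- Let a, b, c be nonzero vectors in ℝ² such that ∠(a, c) > 0, ∠(c, b) > 0, ∠(a, c) + ∠(c, b) = ∠(a, b), and ∠(a, b) < π (so c points strictly between a and b). Let h > 0 and consider the vectors A = (a, 0), B = (b, 0), C = (c, h) in ℝ³. Then ∠(A, B) < ∠(A, C) + ∠(C, B) < π. (Note ∠(A, B) = ∠(a, b).) Consequently, the turning angle π − (∠(A,C) + ∠(C,B)) obtained after unfolding the two faces at a band vertex into a plane is strictly positive and strictly smaller than the turning angle π − ∠(a, b) of the projected (flat) configuration. -/

import Mathlib

open Real InnerProductGeometry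

set_option maxHeartbeats 1000000 in
private lemma key_angle_lemma (α β t α' β' : ℝ) (hα : 0 < α) (hβ : 0 < β) (hαβ : α + β < π)
    (ht0 : 0 < t) (ht1 : t < 1)
    (hα'0 : 0 ≤ α') (hα'π : α' ≤ π) (hβ'0 : 0 ≤ β') (hβ'π : β' ≤ π)
    (hcu : Real.cos α' = t * Real.cos α) (hcv : Real.cos β' = t * Real.cos β) :
    α + β < α' + β' ∧ α' + β' < π := by
  have hπ := Real.pi_pos
  have hαπ : α < π := by linarith
  have hβπ : β < π := by linarith
  have hcos_sum_pos : 0 < Real.cos α + Real.cos β := by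
    rw [Real.cos_add_cos]
    have h1 : 0 < Real.cos ((α + β) / 2) :=
      Real.cos_pos_of_mem_Ioo ⟨by linarith, by linarith⟩
    have h2 : 0 < Real.cos ((α - β) / 2) :=
      Real.cos_pos_of_mem_Ioo ⟨by linarith, by linarith⟩
    positivity
  have hpart2 : α' + β' < π := by
    by_contra hcon
    push_neg at hcon
    have h1 : Real.cos α' ≤ Real.cos (π - β') :=
      Real.cos_le_cos_of_nonneg_of_le_pi (by linarith) hα'π (by linarith)
    rw [Real.cos_pi_sub] at h1
    nlinarith
  have hsu : 0 < Real.sin α := Real.sin_pos_of_pos_of_lt_pi hα hαπ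
  have hsv : 0 < Real.sin β := Real.sin_pos_of_pos_of_lt_pi hβ hβπ
  have hsαβ : 0 < Real.sin (α + β) := Real.sin_pos_of_pos_of_lt_pi (by linarith) hαβ
  have hpy1 : Real.sin α ^ 2 + Real.cos α ^ 2 = 1 := Real.sin_sq_add_cos_sq α
  have hpy2 : Real.sin β ^ 2 + Real.cos β ^ 2 = 1 := Real.sin_sq_add_cos_sq β
  have hs1 : 0 ≤ Real.sin α' := Real.sin_nonneg_of_nonneg_of_le_pi hα'0 hα'π
  have hs2 : 0 ≤ Real.sin β' := Real.sin_nonneg_of_nonneg_of_le_pi hβ'0 hβ'π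
  have hpy1' : Real.sin α' ^ 2 = 1 - t ^ 2 * Real.cos α ^ 2 := by
    have h0 := Real.sin_sq_add_cos_sq α'
    rw [hcu] at h0; linear_combination h0
  have hpy2' : Real.sin β' ^ 2 = 1 - t ^ 2 * Real.cos β ^ 2 := by
    have h0 := Real.sin_sq_add_cos_sq β'
    rw [hcv] at h0; linear_combination h0
  have hu1 : Real.cos α ^ 2 ≤ 1 := by nlinarith [sq_nonneg (Real.sin α)]
  have hv1 : Real.cos β ^ 2 ≤ 1 := by nlinarith [sq_nonneg (Real.sin β)]
  have ht2 : t ^ 2 < 1 := by nlinarith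
  have hs1sq : 0 < Real.sin α' ^ 2 := by nlinarith
  have hs2sq : 0 < Real.sin β' ^ 2 := by nlinarith
  have hs1pos : 0 < Real.sin α' := by
    rcases hs1.lt_or_eq with h' | h'
    · exact h'
    · exfalso; rw [← h'] at hs1sq; simp at hs1sq
  have hs2pos : 0 < Real.sin β' := by
    rcases hs2.lt_or_eq with h' | h'
    · exact h'
    · exfalso; rw [← h'] at hs2sq; simp at hs2sq
  have hsin_add : Real.sin (α + β)
      = Real.sin α * Real.cos β + Real.cos α * Real.sin β := Real.sin_add α β
  have hkey : Real.sin α * Real.sin β - (1 - t ^ 2) * (Real.cos α * Real.cos β)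
      < Real.sin α' * Real.sin β' := by
    set u := Real.cos α
    set v := Real.cos β
    set su := Real.sin α
    set sv := Real.sin β
    set s1 := Real.sin α'
    set s2 := Real.sin β'
    rcases le_or_gt (su * sv - (1 - t ^ 2) * (u * v)) 0 with hR | hR
    · nlinarith
    · have hsq : (s1 * s2) ^ 2 - (su * sv - (1 - t ^ 2) * (u * v)) ^ 2
          = (1 - t ^ 2) * (u * sv + v * su) ^ 2 := by
        have e1 : (s1 * s2) ^ 2 = (1 - t ^ 2 * u ^ 2) * (1 - t ^ 2 * v ^ 2) := by
          rw [mul_pow, hpy1', hpy2']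
        nlinarith [e1]
      have hsinpos : 0 < u * sv + v * su := by
        rw [hsin_add] at hsαβ; linarith
      have hpos' : 0 < (1 - t ^ 2) * (u * sv + v * su) ^ 2 :=
        mul_pos (by linarith) (pow_pos hsinpos 2)
      nlinarith [mul_pos hs1pos hs2pos]
  have hcoslt : Real.cos (α' + β') < Real.cos (α + β) := by
    rw [Real.cos_add, Real.cos_add, hcu, hcv]
    nlinarith [hkey]
  have hpart1 : α + β < α' + β' := by
    by_contra hcon
    push_neg at hcon
    have := Real.cos_le_cos_of_nonneg_of_le_pi (by positivity) (le_of_lt hαβ) hcon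
    linarith
  exact ⟨hpart1, hpart2⟩


set_option maxHeartbeats 1000000 in
theorem unfolded_angle_lt_pi_and_gt_projected
    (a b c : EuclideanSpace ℝ (Fin 2)) (ha : a ≠ 0) (hb : b ≠ 0) (hc : c ≠ 0)
    (hac : 0 < InnerProductGeometry.angle a c)
    (hcb : 0 < InnerProductGeometry.angle c b)
    (hsum : InnerProductGeometry.angle a c + InnerProductGeometry.angle c b
      = InnerProductGeometry.angle a b)
    (hab : InnerProductGeometry.angle a b < Real.pi)
    (h : ℝ) (hh : 0 < h)
    (A B C : EuclideanSpace ℝ (Fin 3))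
    (hA : A 0 = a 0 ∧ A 1 = a 1 ∧ A 2 = 0)
    (hB : B 0 = b 0 ∧ B 1 = b 1 ∧ B 2 = 0)
    (hC : C 0 = c 0 ∧ C 1 = c 1 ∧ C 2 = h) :
    InnerProductGeometry.angle A B
        < InnerProductGeometry.angle A C + InnerProductGeometry.angle C B ∧
      InnerProductGeometry.angle A C + InnerProductGeometry.angle C B < Real.pi ∧
      0 < Real.pi - (InnerProductGeometry.angle A C + InnerProductGeometry.angle C B) ∧
      Real.pi - (InnerProductGeometry.angle A C + InnerProductGeometry.angle C B)
        < Real.pi - InnerProductGeometry.angle a b := by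
  have hAC : (inner ℝ A C : ℝ) = inner ℝ a c := by
    simp [PiLp.inner_apply, Fin.sum_univ_three, Fin.sum_univ_two, hA.1, hA.2.1, hA.2.2,
      hC.1, hC.2.1, hC.2.2, RCLike.inner_apply]
  have hCB : (inner ℝ C B : ℝ) = inner ℝ c b := by
    simp [PiLp.inner_apply, Fin.sum_univ_three, Fin.sum_univ_two, hB.1, hB.2.1, hB.2.2,
      hC.1, hC.2.1, hC.2.2, RCLike.inner_apply]
  have hAB : (inner ℝ A B : ℝ) = inner ℝ a b := by
    simp [PiLp.inner_apply, Fin.sum_univ_three, Fin.sum_univ_two, hA.1, hA.2.1, hA.2.2,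
      hB.1, hB.2.1, hB.2.2, RCLike.inner_apply]
  have hnA : ‖A‖ = ‖a‖ := by
    rw [EuclideanSpace.norm_eq, EuclideanSpace.norm_eq]
    simp [Fin.sum_univ_three, Fin.sum_univ_two, hA.1, hA.2.1, hA.2.2]
  have hnB : ‖B‖ = ‖b‖ := by
    rw [EuclideanSpace.norm_eq, EuclideanSpace.norm_eq]
    simp [Fin.sum_univ_three, Fin.sum_univ_two, hB.1, hB.2.1, hB.2.2]
  have hnC : ‖C‖ ^ 2 = ‖c‖ ^ 2 + h ^ 2 := by
    rw [EuclideanSpace.norm_eq, EuclideanSpace.norm_eq]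
    rw [Real.sq_sqrt (by positivity), Real.sq_sqrt (by positivity)]
    simp [Fin.sum_univ_three, Fin.sum_univ_two, hC.1, hC.2.1, hC.2.2]
  have hapos : 0 < ‖a‖ := norm_pos_iff.mpr ha
  have hbpos : 0 < ‖b‖ := norm_pos_iff.mpr hb
  have hcpos : 0 < ‖c‖ := norm_pos_iff.mpr hc
  have hCgt : ‖c‖ < ‖C‖ := by nlinarith [norm_nonneg C]
  have hCpos : 0 < ‖C‖ := lt_trans hcpos hCgt
  set t : ℝ := ‖c‖ / ‖C‖ with hts
  have ht0 : 0 < t := div_pos hcpos hCpos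
  have ht1 : t < 1 := (div_lt_one hCpos).mpr hCgt
  have hangAB : InnerProductGeometry.angle A B = InnerProductGeometry.angle a b := by
    rw [InnerProductGeometry.angle, InnerProductGeometry.angle, hAB, hnA, hnB]
  have hcosAC : Real.cos (InnerProductGeometry.angle A C)
      = t * Real.cos (InnerProductGeometry.angle a c) := by
    rw [InnerProductGeometry.cos_angle, InnerProductGeometry.cos_angle, hAC, hnA, hts]
    field_simp
  have hcosCB : Real.cos (InnerProductGeometry.angle C B)
      = t * Real.cos (InnerProductGeometry.angle c b) := by
    rw [InnerProductGeometry.cos_angle, InnerProductGeometry.cos_angle, hCB, hnB, hts]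
    field_simp
  obtain ⟨h1, h2⟩ := key_angle_lemma (InnerProductGeometry.angle a c)
    (InnerProductGeometry.angle c b) t (InnerProductGeometry.angle A C)
    (InnerProductGeometry.angle C B) hac hcb (by rw [hsum]; exact hab) ht0 ht1
    (InnerProductGeometry.angle_nonneg A C) (InnerProductGeometry.angle_le_pi A C)
    (InnerProductGeometry.angle_nonneg C B) (InnerProductGeometry.angle_le_pi C B)
    hcosAC hcosCB
  refine ⟨by rw [hangAB]; linarith, h2, by linarith, by linarith⟩
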